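/- Let Φ denote the standard normal cumulative distribution function and, for a ≥ 1, define k_a(t) = a^{−1} log Φ(at). Then for every T > 0 there exists a constant C < ∞ such that |k_a(t) − k_b(t)| ≤ C|a − b| for all a, b ∈ [1,∞) and all t ∈ [−T,T]; in particular, sup{ |(∂/∂a)(a^{−1} log Φ(at))| : a ≥ 1, |t| ≤ T } < ∞. -/

import Mathlib

/-!
STATEMENT 16: uniform Lipschitz property in `a` of `k_a(t) = a⁻¹ log Φ(a t)`,
where `Φ` is the standard normal cdf.  For every `T > 0` there is a constant
`C < ∞` with `|k_a(t) − k_b(t)| ≤ C |a − b|` for all `a, b ∈ [1, ∞)` and all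
`t ∈ [−T, T]`; in particular the partial derivative in `a` is uniformly
bounded over `a ≥ 1`, `|t| ≤ T`.
-/

open MeasureTheory

noncomputable section

/-- The standard normal cumulative distribution function. -/
def stdNormalCDF (t : ℝ) : ℝ :=
  (Real.sqrt (2 * Real.pi))⁻¹ * ∫ y in Set.Iic t, Real.exp (-(y ^ 2) / 2)

lemma gauss_integrable : Integrable (fun y : ℝ => Real.exp (-(y ^ 2) / 2)) := by
  have := integrable_exp_neg_mul_sq (by norm_num : (0:ℝ) < 1/2)
  convert this using 2 with y
  ring_nf

lemma I_lb (t δ : ℝ) (hδ : 0 < δ) :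
    δ * Real.exp (-((|t| + δ) ^ 2) / 2) ≤ ∫ y in Set.Iic t, Real.exp (-(y ^ 2) / 2) := by
  have h1 : ∫ y in Set.Ioc (t - δ) t, Real.exp (-(y ^ 2) / 2)
      ≤ ∫ y in Set.Iic t, Real.exp (-(y ^ 2) / 2) := by
    apply setIntegral_mono_set gauss_integrable.integrableOn
    · exact Filter.Eventually.of_forall fun y => (Real.exp_pos _).le
    · exact Filter.Eventually.of_forall fun y hy => hy.2
  refine le_trans ?_ h1
  rw [← intervalIntegral.integral_of_le (by linarith)]
  have h2 : δ * Real.exp (-((|t| + δ) ^ 2) / 2)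
      = ∫ _ in (t - δ)..t, Real.exp (-((|t| + δ) ^ 2) / 2) := by
    rw [intervalIntegral.integral_const, smul_eq_mul]; ring_nf
  rw [h2]
  apply intervalIntegral.integral_mono_on (by linarith)
  · exact intervalIntegrable_const
  · exact gauss_integrable.intervalIntegrable
  · intro y hy
    apply Real.exp_le_exp.2
    have hy1 := hy.1; have hy2 := hy.2
    have : y ^ 2 ≤ (|t| + δ) ^ 2 := by
      have h3 : |y| ≤ |t| + δ := by
        rw [abs_le]
        constructor
        · nlinarith [neg_abs_le t]
        · nlinarith [le_abs_self t]
      calc y ^ 2 = |y| ^ 2 := (sq_abs y).symm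
        _ ≤ (|t| + δ) ^ 2 := by nlinarith [abs_nonneg y]
    linarith

lemma sqrt2pi_pos : 0 < Real.sqrt (2 * Real.pi) :=
  Real.sqrt_pos.2 (by positivity)

lemma I_pos (t : ℝ) : 0 < ∫ y in Set.Iic t, Real.exp (-(y ^ 2) / 2) :=
  lt_of_lt_of_le (by positivity) (I_lb t 1 one_pos)

lemma cdf_pos (t : ℝ) : 0 < stdNormalCDF t :=
  mul_pos (inv_pos.2 sqrt2pi_pos) (I_pos t)

lemma I_le (t : ℝ) : ∫ y in Set.Iic t, Real.exp (-(y ^ 2) / 2) ≤ Real.sqrt (2 * Real.pi) := by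
  have h1 : ∫ y in Set.Iic t, Real.exp (-(y ^ 2) / 2) ≤ ∫ y : ℝ, Real.exp (-(y ^ 2) / 2) :=
    setIntegral_le_integral gauss_integrable
      (Filter.Eventually.of_forall fun y => (Real.exp_pos _).le)
  have h2 : ∫ y : ℝ, Real.exp (-(y ^ 2) / 2) = Real.sqrt (2 * Real.pi) := by
    have := integral_gaussian (1/2)
    rw [show Real.pi / (1/2) = 2 * Real.pi by ring] at this
    rw [← this]
    congr 1 with y
    ring_nf
  linarith

lemma cdf_le_one (t : ℝ) : stdNormalCDF t ≤ 1 := by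
  rw [stdNormalCDF]
  rw [inv_mul_le_iff₀ sqrt2pi_pos, mul_one]
  exact I_le t

lemma cdf_mono {s t : ℝ} (h : s ≤ t) : stdNormalCDF s ≤ stdNormalCDF t := by
  unfold stdNormalCDF
  apply mul_le_mul_of_nonneg_left _ (inv_pos.2 sqrt2pi_pos).le
  apply setIntegral_mono_set gauss_integrable.integrableOn
    (Filter.Eventually.of_forall fun y => (Real.exp_pos _).le)
    (Filter.Eventually.of_forall fun y hy => le_trans hy h)

lemma cdf_hasDeriv (t : ℝ) :
    HasDerivAt stdNormalCDF ((Real.sqrt (2 * Real.pi))⁻¹ * Real.exp (-(t ^ 2) / 2)) t := by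
  have hcont : Continuous (fun y : ℝ => Real.exp (-(y ^ 2) / 2)) := by continuity
  have key : HasDerivAt (fun u : ℝ => ∫ y in Set.Iic u, Real.exp (-(y ^ 2) / 2))
      (Real.exp (-(t ^ 2) / 2)) t := by
    have heq : ∀ u : ℝ, (∫ y in Set.Iic u, Real.exp (-(y ^ 2) / 2))
        = (∫ y in Set.Iic (0:ℝ), Real.exp (-(y ^ 2) / 2)) + ∫ y in (0:ℝ)..u, Real.exp (-(y ^ 2) / 2) := by
      intro u
      have := intervalIntegral.integral_Iic_sub_Iic gauss_integrable.integrableOn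
        gauss_integrable.integrableOn (a := 0) (b := u)
      linarith
    have hd : HasDerivAt (fun u : ℝ => (∫ y in Set.Iic (0:ℝ), Real.exp (-(y ^ 2) / 2))
        + ∫ y in (0:ℝ)..u, Real.exp (-(y ^ 2) / 2)) (Real.exp (-(t ^ 2) / 2)) t := by
      apply HasDerivAt.const_add
      exact intervalIntegral.integral_hasDerivAt_right
        gauss_integrable.intervalIntegrable
        (hcont.stronglyMeasurableAtFilter _ _) hcont.continuousAt
    exact hd.congr_of_eventuallyEq (Filter.Eventually.of_forall heq)
  unfold stdNormalCDF
  exact key.const_mul _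

lemma log_cdf_nonpos (x : ℝ) : Real.log (stdNormalCDF x) ≤ 0 :=
  Real.log_nonpos (cdf_pos x).le (cdf_le_one x)

lemma log_cdf_lb (x : ℝ) :
    -((|x| + 1) ^ 2) / 2 - Real.log (Real.sqrt (2 * Real.pi)) ≤ Real.log (stdNormalCDF x) := by
  have h1 : (Real.sqrt (2 * Real.pi))⁻¹ * Real.exp (-((|x| + 1) ^ 2) / 2) ≤ stdNormalCDF x := by
    unfold stdNormalCDF
    apply mul_le_mul_of_nonneg_left _ (inv_pos.2 sqrt2pi_pos).le
    have := I_lb x 1 one_pos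
    linarith
  have h2 := Real.log_le_log (by positivity) h1
  rw [Real.log_mul (by positivity) (Real.exp_pos _).ne', Real.log_inv, Real.log_exp] at h2
  linarith

lemma ratio_bound (x : ℝ) :
    (Real.sqrt (2 * Real.pi))⁻¹ * Real.exp (-(x ^ 2) / 2) / stdNormalCDF x
      ≤ Real.exp 2 * (1 + |x|) := by
  rw [div_le_iff₀ (cdf_pos x)]
  have hs := (inv_pos.2 sqrt2pi_pos).le
  rcases le_or_gt (-1 : ℝ) x with hx | hx
  · -- x ≥ -1 : Φ(x) ≥ Φ(-1) ≥ (√2π)⁻¹ e⁻²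
    have hlow : (Real.sqrt (2 * Real.pi))⁻¹ * Real.exp (-2 : ℝ) ≤ stdNormalCDF x := by
      refine le_trans ?_ (cdf_mono hx)
      unfold stdNormalCDF
      apply mul_le_mul_of_nonneg_left _ hs
      have h0 := I_lb (-1) 1 one_pos
      have h1 : (1:ℝ) * Real.exp (-((|(-1:ℝ)| + 1) ^ 2) / 2) = Real.exp (-2:ℝ) := by
        norm_num
      linarith [h0, h1.symm.le]
    have hnum : Real.exp (-(x ^ 2) / 2) ≤ 1 := by
      rw [show (1:ℝ) = Real.exp 0 by simp]
      exact Real.exp_le_exp.2 (by nlinarith [sq_nonneg x])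
    have he : Real.exp 2 * Real.exp (-2 : ℝ) = 1 := by
      rw [← Real.exp_add]; norm_num
    have h1 : (Real.sqrt (2 * Real.pi))⁻¹ * Real.exp (-(x ^ 2) / 2)
        ≤ Real.exp 2 * ((Real.sqrt (2 * Real.pi))⁻¹ * Real.exp (-2 : ℝ)) := by
      nlinarith [mul_le_mul_of_nonneg_left hnum hs]
    have h2 : Real.exp 2 * ((Real.sqrt (2 * Real.pi))⁻¹ * Real.exp (-2 : ℝ))
        ≤ Real.exp 2 * (1 + |x|) * stdNormalCDF x := by
      nlinarith [mul_le_mul_of_nonneg_left hlow (Real.exp_pos 2).le,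
        mul_nonneg (mul_nonneg (Real.exp_pos 2).le (abs_nonneg x)) (cdf_pos x).le]
    linarith
  · -- x ≤ -1
    have hx1 : (1:ℝ) ≤ |x| := by rw [abs_of_neg (by linarith)]; linarith
    have hxpos : 0 < |x| := by linarith
    have hinv : |x|⁻¹ ≤ 1 := by rw [inv_le_one_iff₀]; right; exact hx1
    have hmul : |x| * |x|⁻¹ = 1 := mul_inv_cancel₀ hxpos.ne'
    have hlow : (Real.sqrt (2 * Real.pi))⁻¹ * (|x|⁻¹ * Real.exp (-(x ^ 2 + 3) / 2))
        ≤ stdNormalCDF x := by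
      unfold stdNormalCDF
      apply mul_le_mul_of_nonneg_left _ hs
      refine le_trans ?_ (I_lb x |x|⁻¹ (inv_pos.2 hxpos))
      apply mul_le_mul_of_nonneg_left _ (inv_pos.2 hxpos).le
      apply Real.exp_le_exp.2
      have hexp : (|x| + |x|⁻¹) ^ 2 ≤ x ^ 2 + 3 := by
        nlinarith [sq_abs x, (inv_pos.2 hxpos).le]
      linarith
    have key : (Real.sqrt (2 * Real.pi))⁻¹ * Real.exp (-(x ^ 2) / 2)
        ≤ Real.exp 2 * (1 + |x|) * ((Real.sqrt (2 * Real.pi))⁻¹ * (|x|⁻¹ * Real.exp (-(x ^ 2 + 3) / 2))) := by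
      have he : Real.exp (-(x ^ 2) / 2) ≤ Real.exp 2 * Real.exp (-(x ^ 2 + 3) / 2) := by
        rw [← Real.exp_add]
        apply Real.exp_le_exp.2
        linarith
      have hfac : (1:ℝ) ≤ (1 + |x|) * |x|⁻¹ := by
        nlinarith
      calc (Real.sqrt (2 * Real.pi))⁻¹ * Real.exp (-(x ^ 2) / 2)
          ≤ (Real.sqrt (2 * Real.pi))⁻¹ * (Real.exp 2 * Real.exp (-(x ^ 2 + 3) / 2)) :=
            mul_le_mul_of_nonneg_left he hs
        _ ≤ (Real.sqrt (2 * Real.pi))⁻¹ * (Real.exp 2 * Real.exp (-(x ^ 2 + 3) / 2))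
              * ((1 + |x|) * |x|⁻¹) := le_mul_of_one_le_right (by positivity) hfac
        _ = Real.exp 2 * (1 + |x|) * ((Real.sqrt (2 * Real.pi))⁻¹ * (|x|⁻¹ * Real.exp (-(x ^ 2 + 3) / 2))) := by
            ring
    refine le_trans key ?_
    apply mul_le_mul_of_nonneg_left hlow
    positivity

def kderiv (t a : ℝ) : ℝ :=
  -(a ^ 2)⁻¹ * Real.log (stdNormalCDF (a * t)) +
    a⁻¹ * ((Real.sqrt (2 * Real.pi))⁻¹ * Real.exp (-((a * t) ^ 2) / 2) * t / stdNormalCDF (a * t))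

lemma g_hasDeriv (t a : ℝ) (ha : a ≠ 0) :
    HasDerivAt (fun a' : ℝ => a'⁻¹ * Real.log (stdNormalCDF (a' * t))) (kderiv t a) a := by
  have h1 : HasDerivAt (fun a' : ℝ => a' * t) t a := by
    simpa using (hasDerivAt_id a).mul_const t
  have h2 : HasDerivAt (fun a' : ℝ => stdNormalCDF (a' * t))
      ((Real.sqrt (2 * Real.pi))⁻¹ * Real.exp (-((a * t) ^ 2) / 2) * t) a :=
    by have := (cdf_hasDeriv (a * t)).comp a h1; exact this
  have h3 : HasDerivAt (fun a' : ℝ => Real.log (stdNormalCDF (a' * t)))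
      ((Real.sqrt (2 * Real.pi))⁻¹ * Real.exp (-((a * t) ^ 2) / 2) * t / stdNormalCDF (a * t)) a :=
    h2.log (cdf_pos (a * t)).ne'
  have h4 : HasDerivAt (fun a' : ℝ => a'⁻¹) (-(a ^ 2)⁻¹) a := hasDerivAt_inv ha
  have := h4.fun_mul h3
  simpa [kderiv] using this

lemma kderiv_bound (T a t : ℝ) (ha : 1 ≤ a) (ht : |t| ≤ T) :
    |kderiv t a| ≤ (T + 1) ^ 2 / 2 + Real.log (Real.sqrt (2 * Real.pi))
      + Real.exp 2 * (T + T ^ 2) := by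
  have hT0 : 0 ≤ T := (abs_nonneg t).trans ht
  have ha0 : (0:ℝ) < a := lt_of_lt_of_le one_pos ha
  have hlog0 := log_cdf_nonpos (a * t)
  have hloglb := log_cdf_lb (a * t)
  have hL : 0 ≤ Real.log (Real.sqrt (2 * Real.pi)) := by
    apply Real.log_nonneg
    rw [show (1:ℝ) = Real.sqrt 1 by simp]
    apply Real.sqrt_le_sqrt
    nlinarith [Real.pi_gt_three]
  have habs : |a * t| = a * |t| := by rw [abs_mul, abs_of_pos ha0]
  -- Term 1 bound
  have hterm1 : |(-(a ^ 2)⁻¹ * Real.log (stdNormalCDF (a * t)))|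
      ≤ (T + 1) ^ 2 / 2 + Real.log (Real.sqrt (2 * Real.pi)) := by
    rw [abs_mul, abs_neg, abs_inv, abs_of_pos (by positivity : (0:ℝ) < a ^ 2),
      abs_of_nonpos hlog0]
    have h1 : -Real.log (stdNormalCDF (a * t))
        ≤ (a * |t| + 1) ^ 2 / 2 + Real.log (Real.sqrt (2 * Real.pi)) := by
      rw [habs] at hloglb; linarith
    have h2 : (a ^ 2)⁻¹ * (-Real.log (stdNormalCDF (a * t)))
        ≤ (a ^ 2)⁻¹ * ((a * |t| + 1) ^ 2 / 2 + Real.log (Real.sqrt (2 * Real.pi))) :=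
      mul_le_mul_of_nonneg_left h1 (by positivity)
    refine h2.trans ?_
    have ha2 : (a ^ 2)⁻¹ ≤ 1 := by
      rw [inv_le_one_iff₀]; right; nlinarith
    have hkey : (a ^ 2)⁻¹ * ((a * |t| + 1) ^ 2 / 2) ≤ (T + 1) ^ 2 / 2 := by
      have h3 : (a * |t| + 1) ^ 2 ≤ a ^ 2 * (T + 1) ^ 2 := by
        have h5 : a * |t| ≤ a * T := mul_le_mul_of_nonneg_left ht ha0.le
        have h6 : a * |t| + 1 ≤ a * (T + 1) := by nlinarith
        have h7 : (0:ℝ) ≤ a * |t| + 1 := by positivity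
        nlinarith [mul_self_le_mul_self h7 h6]
      have h4 : (a ^ 2)⁻¹ * ((a * |t| + 1) ^ 2 / 2) ≤ (a ^ 2)⁻¹ * (a ^ 2 * (T + 1) ^ 2 / 2) := by
        apply mul_le_mul_of_nonneg_left _ (by positivity)
        linarith
      rw [show (a ^ 2)⁻¹ * (a ^ 2 * (T + 1) ^ 2 / 2) = (a ^ 2)⁻¹ * a ^ 2 * ((T + 1) ^ 2 / 2) by ring,
        inv_mul_cancel₀ (by positivity : (a:ℝ) ^ 2 ≠ 0), one_mul] at h4
      exact h4
    nlinarith [mul_le_mul_of_nonneg_left hL (by positivity : (0:ℝ) ≤ (a^2)⁻¹)]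
  -- Term 2 bound
  have hterm2 : |a⁻¹ * ((Real.sqrt (2 * Real.pi))⁻¹ * Real.exp (-((a * t) ^ 2) / 2) * t
      / stdNormalCDF (a * t))| ≤ Real.exp 2 * (T + T ^ 2) := by
    have hratio := ratio_bound (a * t)
    rw [habs] at hratio
    have hAbs : |a⁻¹ * ((Real.sqrt (2 * Real.pi))⁻¹ * Real.exp (-((a * t) ^ 2) / 2) * t
        / stdNormalCDF (a * t))|
        = a⁻¹ * ((Real.sqrt (2 * Real.pi))⁻¹ * Real.exp (-((a * t) ^ 2) / 2)
          / stdNormalCDF (a * t)) * |t| := by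
      rw [abs_mul, abs_of_pos (inv_pos.2 ha0), abs_div, abs_of_pos (cdf_pos _), abs_mul,
        abs_of_pos (by positivity : (0:ℝ) < (Real.sqrt (2 * Real.pi))⁻¹ * Real.exp (-((a * t) ^ 2) / 2))]
      ring
    rw [hAbs]
    have h1 : a⁻¹ * ((Real.sqrt (2 * Real.pi))⁻¹ * Real.exp (-((a * t) ^ 2) / 2)
        / stdNormalCDF (a * t)) * |t| ≤ a⁻¹ * (Real.exp 2 * (1 + a * |t|)) * |t| := by
      apply mul_le_mul_of_nonneg_right _ (abs_nonneg t)
      exact mul_le_mul_of_nonneg_left hratio (inv_pos.2 ha0).le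
    refine h1.trans ?_
    have hainv : a⁻¹ ≤ 1 := by rw [inv_le_one_iff₀]; right; exact ha
    have hexpand : a⁻¹ * (Real.exp 2 * (1 + a * |t|)) * |t|
        = Real.exp 2 * (a⁻¹ * |t| + (a⁻¹ * a) * |t| ^ 2) := by ring
    rw [hexpand, inv_mul_cancel₀ ha0.ne', one_mul]
    have h2 : a⁻¹ * |t| ≤ T := by
      calc a⁻¹ * |t| ≤ 1 * |t| := mul_le_mul_of_nonneg_right hainv (abs_nonneg t)
        _ = |t| := one_mul _
        _ ≤ T := ht
    have h3 : |t| ^ 2 ≤ T ^ 2 := by nlinarith [abs_nonneg t]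
    nlinarith [Real.exp_pos (2:ℝ)]
  calc |kderiv t a| ≤ _ := abs_add_le _ _
    _ ≤ (T + 1) ^ 2 / 2 + Real.log (Real.sqrt (2 * Real.pi)) + Real.exp 2 * (T + T ^ 2) := by
        linarith

theorem ka_uniformly_lipschitz_in_a (T : ℝ) (hT : 0 < T) :
    (∃ C : ℝ, ∀ a b : ℝ, 1 ≤ a → 1 ≤ b → ∀ t : ℝ, |t| ≤ T →
        |a⁻¹ * Real.log (stdNormalCDF (a * t)) - b⁻¹ * Real.log (stdNormalCDF (b * t))| ≤
          C * |a - b|) ∧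
    (∃ C' : ℝ, ∀ a : ℝ, 1 ≤ a → ∀ t : ℝ, |t| ≤ T →
        |deriv (fun a' : ℝ => a'⁻¹ * Real.log (stdNormalCDF (a' * t))) a| ≤ C') := by
  set C : ℝ := (T + 1) ^ 2 / 2 + Real.log (Real.sqrt (2 * Real.pi))
      + Real.exp 2 * (T + T ^ 2) with hC
  constructor
  · refine ⟨C, fun a b ha hb t ht => ?_⟩
    have key := (convex_Ici (1:ℝ)).norm_image_sub_le_of_norm_hasDerivWithin_le
      (f := fun a' : ℝ => a'⁻¹ * Real.log (stdNormalCDF (a' * t)))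
      (f' := fun a' => kderiv t a') (s := Set.Ici (1:ℝ))
      (fun x hx => (g_hasDeriv t x (by exact ne_of_gt (lt_of_lt_of_le one_pos hx))).hasDerivWithinAt)
      (fun x hx => by
        rw [Real.norm_eq_abs]
        exact kderiv_bound T x t hx ht)
      hb ha
    rw [Real.norm_eq_abs, Real.norm_eq_abs] at key
    exact key
  · refine ⟨C, fun a ha t ht => ?_⟩
    rw [(g_hasDeriv t a (by exact ne_of_gt (lt_of_lt_of_le one_pos ha))).deriv]
    exact kderiv_bound T a t ha ht
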